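/- Let v ∈ ℂ⁴ with v*Uv < 0, where U is the 4×4 matrix with rows (0,1,0,0),(1,0,0,0),(0,0,1,0),(0,0,0,1), and v* denotes conjugate transpose. Then vᵀUv ≠ 0. -/

import Mathlib

open Matrix

/-- The matrix `U` with rows (0,1,0,0), (1,0,0,0), (0,0,1,0), (0,0,0,1), over `ℂ`. -/
def UmatC : Matrix (Fin 4) (Fin 4) ℂ := !![0,1,0,0; 1,0,0,0; 0,0,1,0; 0,0,0,1]

theorem transpose_form_ne_zero_on_ball (v : Fin 4 → ℂ)
    (hball : ((star v) ⬝ᵥ (UmatC *ᵥ v)).re < 0) :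
    v ⬝ᵥ (UmatC *ᵥ v) ≠ 0 := by
  intro h
  simp [UmatC, dotProduct, mulVec, Fin.sum_univ_four, Matrix.vecHead, Matrix.vecTail] at h hball
  set a := v 0
  set b := v 1
  set c := v 2
  set d := v 3
  have hT : 2*(a*b) = -(c^2 + d^2) := by linear_combination h
  have h1 : ‖2*(a*b)‖ = ‖c^2+d^2‖ := by
    rw [hT, norm_neg]
  have h2 : 2 * (‖a‖ * ‖b‖) ≤ ‖c‖ ^ 2 + ‖d‖ ^ 2 := by
    have e : ‖2*(a*b)‖ = 2*(‖a‖ * ‖b‖) := by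
      rw [norm_mul, norm_mul, Complex.norm_two]
    calc 2*(‖a‖ * ‖b‖) = ‖c^2+d^2‖ := by rw [← e, h1]
      _ ≤ ‖c^2‖ + ‖d^2‖ := norm_add_le _ _
      _ = _ := by rw [norm_pow, norm_pow]
  have t1 := Complex.abs_re_le_norm ((starRingEnd ℂ) a * b)
  rw [norm_mul, Complex.norm_conj] at t1
  obtain ⟨l, r⟩ := abs_le.mp t1
  have hre : ((starRingEnd ℂ) a * b).re = a.re * b.re + a.im * b.im := by
    simp [Complex.mul_re, Complex.conj_re, Complex.conj_im]
  have hc : ‖c‖ ^ 2 = c.re^2 + c.im^2 := by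
    rw [Complex.sq_norm, Complex.normSq_apply]; ring
  have hd : ‖d‖ ^ 2 = d.re^2 + d.im^2 := by
    rw [Complex.sq_norm, Complex.normSq_apply]; ring
  rw [hre] at l
  nlinarith [h2, l, hc, hd, hball]
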